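/- The strict-tolerant n-tuple consequence coincides with ST consequence: for all sets of sentences Γ ∪ {A}, Γ ⊨_{n,s,t} A if and only if Γ ⊨_{st} A. -/

import Mathlib

/-- Helper instance so that instance search for the lexicographic order does not get stuck. -/
instance (n : ℕ) : WellFoundedLT (Fin n) := inferInstance

/-- `2^n`: the `n`-fold product of the two-element Boolean algebra `2 = {0,1}` (as `Bool`,
with `false = 0`, `true = 1`), carrying the lexicographic order. -/
abbrev Tup (n : ℕ) := Lex (Fin n → Bool)

/-- The componentwise complement `-⟨x₁,…,xₙ⟩ = ⟨1-x₁,…,1-xₙ⟩` on `2^n`. -/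
def tneg {n : ℕ} (x : Tup n) : Tup n := toLex fun i => !(ofLex x i)

/-- The top value `⟨1,…,1⟩` of `2^n`. -/
def tTop (n : ℕ) : Tup n := toLex fun _ => true

/-- The bottom value `⟨0,…,0⟩` of `2^n`. -/
def tBot (n : ℕ) : Tup n := toLex fun _ => false

/-- The three truth values `f < i < t` (i.e. `0 < 1/2 < 1`). -/
inductive V3 where
  | f | i | t
deriving DecidableEq

instance instFintypeV3 : Fintype V3 :=
  ⟨{V3.f, V3.i, V3.t}, by intro x; cases x <;> simp⟩

def V3.toFin : V3 → Fin 3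
  | .f => 0 | .i => 1 | .t => 2

instance : LinearOrder V3 := LinearOrder.lift' V3.toFin (by decide)

/-- Three-valued negation: `1 - x`. -/
def V3.negv : V3 → V3
  | .t => .f | .i => .i | .f => .t

instance (n : ℕ) : Fintype (Tup n) := Fintype.ofEquiv _ toLex
instance (n : ℕ) : Nonempty (Tup n) := ⟨tBot n⟩
noncomputable instance (n : ℕ) : CompleteLinearOrder (Tup n) :=
  Fintype.toCompleteLinearOrder _
instance : Nonempty V3 := ⟨V3.t⟩
noncomputable instance : CompleteLinearOrder V3 :=
  Fintype.toCompleteLinearOrderOfNonempty _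

/-- Terms of a first-order language: variables and constant symbols. -/
inductive Term (Const : Type) where
  | var : ℕ → Term Const
  | const : Const → Term Const

/-- First-order formulas over predicate symbols `Pred` (with arities `ar`),
constants `Const`, and the connectives `¬, ∧, ∨, ∀, ∃`. -/
inductive FForm (Pred Const : Type) (ar : Pred → ℕ) where
  | atom : (P : Pred) → (Fin (ar P) → Term Const) → FForm Pred Const ar
  | neg : FForm Pred Const ar → FForm Pred Const ar
  | conj : FForm Pred Const ar → FForm Pred Const ar → FForm Pred Const ar
  | disj : FForm Pred Const ar → FForm Pred Const ar → FForm Pred Const ar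
  | all : ℕ → FForm Pred Const ar → FForm Pred Const ar
  | ex : ℕ → FForm Pred Const ar → FForm Pred Const ar

/-- Evaluation of terms, given interpretations of the constants and an assignment. -/
def Term.evalt {Const D : Type} (cv : Const → D) (σ : ℕ → D) : Term Const → D
  | .var x => σ x
  | .const c => cv c

/-- The Clemens valuation over `2^n`: componentwise complement for `¬`, lexicographic
min/max for `∧`/`∨`, and inf/sup over the domain for the quantifiers. -/
noncomputable def fevalT {Pred Const : Type} {ar : Pred → ℕ} {n : ℕ} {D : Type}
    (cv : Const → D) (pv : (P : Pred) → (Fin (ar P) → D) → Tup n) (σ : ℕ → D) :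
    FForm Pred Const ar → Tup n
  | .atom P ts => pv P fun j => (ts j).evalt cv σ
  | .neg A => tneg (fevalT cv pv σ A)
  | .conj A B => min (fevalT cv pv σ A) (fevalT cv pv σ B)
  | .disj A B => max (fevalT cv pv σ A) (fevalT cv pv σ B)
  | .all x A => ⨅ d : D, fevalT cv pv (Function.update σ x d) A
  | .ex x A => ⨆ d : D, fevalT cv pv (Function.update σ x d) A

/-- The three-valued (strong Kleene / LP) valuation over `{0, 1/2, 1}`: `1 - x` for `¬`,
min/max for `∧`/`∨`, and inf/sup over the domain for the quantifiers. -/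
noncomputable def feval3 {Pred Const : Type} {ar : Pred → ℕ} {D : Type}
    (cv : Const → D) (pv : (P : Pred) → (Fin (ar P) → D) → V3) (σ : ℕ → D) :
    FForm Pred Const ar → V3
  | .atom P ts => pv P fun j => (ts j).evalt cv σ
  | .neg A => (feval3 cv pv σ A).negv
  | .conj A B => min (feval3 cv pv σ A) (feval3 cv pv σ B)
  | .disj A B => max (feval3 cv pv σ A) (feval3 cv pv σ B)
  | .all x A => ⨅ d : D, feval3 cv pv (Function.update σ x d) A
  | .ex x A => ⨆ d : D, feval3 cv pv (Function.update σ x d) A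

/-- Strict consequence `Γ ⊨_{n,s} A`: in every Clemens interpretation (with nonempty
domain) and assignment, if every premise takes the value `⟨1,…,1⟩`, so does `A`. -/
def ConseqS (n : ℕ) (Pred Const : Type) (ar : Pred → ℕ)
    (Γ : Set (FForm Pred Const ar)) (A : FForm Pred Const ar) : Prop :=
  ∀ (D : Type) (_ : Nonempty D) (cv : Const → D)
    (pv : (P : Pred) → (Fin (ar P) → D) → Tup n) (σ : ℕ → D),
    (∀ B ∈ Γ, fevalT cv pv σ B = tTop n) → fevalT cv pv σ A = tTop n

/-- Tolerant consequence `Γ ⊨_{n,t} A`: preservation of values `≠ ⟨0,…,0⟩`. -/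
def ConseqT (n : ℕ) (Pred Const : Type) (ar : Pred → ℕ)
    (Γ : Set (FForm Pred Const ar)) (A : FForm Pred Const ar) : Prop :=
  ∀ (D : Type) (_ : Nonempty D) (cv : Const → D)
    (pv : (P : Pred) → (Fin (ar P) → D) → Tup n) (σ : ℕ → D),
    (∀ B ∈ Γ, fevalT cv pv σ B ≠ tBot n) → fevalT cv pv σ A ≠ tBot n

/-- Strict-tolerant consequence `Γ ⊨_{n,s,t} A`: if all premises take value `⟨1,…,1⟩`,
the conclusion takes a value `≠ ⟨0,…,0⟩`. -/
def ConseqNST (n : ℕ) (Pred Const : Type) (ar : Pred → ℕ)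
    (Γ : Set (FForm Pred Const ar)) (A : FForm Pred Const ar) : Prop :=
  ∀ (D : Type) (_ : Nonempty D) (cv : Const → D)
    (pv : (P : Pred) → (Fin (ar P) → D) → Tup n) (σ : ℕ → D),
    (∀ B ∈ Γ, fevalT cv pv σ B = tTop n) → fevalT cv pv σ A ≠ tBot n

/-- K3 consequence `Γ ⊨_k A`: preservation of the value `1` in all three-valued
(strong Kleene) interpretations. -/
def ConseqK (Pred Const : Type) (ar : Pred → ℕ)
    (Γ : Set (FForm Pred Const ar)) (A : FForm Pred Const ar) : Prop :=
  ∀ (D : Type) (_ : Nonempty D) (cv : Const → D)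
    (pv : (P : Pred) → (Fin (ar P) → D) → V3) (σ : ℕ → D),
    (∀ B ∈ Γ, feval3 cv pv σ B = V3.t) → feval3 cv pv σ A = V3.t

/-- LP consequence `Γ ⊨_l A`: preservation of the designated values `{1, 1/2}`. -/
def ConseqL (Pred Const : Type) (ar : Pred → ℕ)
    (Γ : Set (FForm Pred Const ar)) (A : FForm Pred Const ar) : Prop :=
  ∀ (D : Type) (_ : Nonempty D) (cv : Const → D)
    (pv : (P : Pred) → (Fin (ar P) → D) → V3) (σ : ℕ → D),
    (∀ B ∈ Γ, feval3 cv pv σ B ∈ ({V3.t, V3.i} : Set V3)) →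
      feval3 cv pv σ A ∈ ({V3.t, V3.i} : Set V3)

/-- ST consequence `Γ ⊨_st A`: if all premises take value `1`, the conclusion takes a
value in `{1, 1/2}`. -/
def ConseqST (Pred Const : Type) (ar : Pred → ℕ)
    (Γ : Set (FForm Pred Const ar)) (A : FForm Pred Const ar) : Prop :=
  ∀ (D : Type) (_ : Nonempty D) (cv : Const → D)
    (pv : (P : Pred) → (Fin (ar P) → D) → V3) (σ : ℕ → D),
    (∀ B ∈ Γ, feval3 cv pv σ B = V3.t) → feval3 cv pv σ A ∈ ({V3.t, V3.i} : Set V3)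

/-! ### Auxiliary development -/

lemma Tup.ext_iff' {n : ℕ} {x y : Tup n} : x = y ↔ ∀ i, ofLex x i = ofLex y i := by
  constructor
  · rintro rfl i; rfl
  · intro h; exact ofLex.injective (funext h)

lemma le_tTop {n : ℕ} (x : Tup n) : x ≤ tTop n :=
  Pi.toLex_monotone (fun i => Bool.le_true (ofLex x i))

lemma tBot_le {n : ℕ} (x : Tup n) : tBot n ≤ x :=
  Pi.toLex_monotone (fun i => Bool.false_le (ofLex x i))

/-- Collapse map `2^n → {f,i,t}`. -/
def phi {n : ℕ} (x : Tup n) : V3 :=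
  if x = tTop n then .t else if x = tBot n then .f else .i

lemma V3.le_t (v : V3) : v ≤ V3.t := by cases v <;> decide
lemma V3.f_le (v : V3) : V3.f ≤ v := by cases v <;> decide

lemma phi_mono {n : ℕ} : Monotone (phi (n := n)) := by
  intro x y hxy
  rcases eq_or_ne y (tTop n) with hy | hy
  · rw [hy]; simp only [phi, if_pos rfl]; exact V3.le_t _
  · rcases eq_or_ne x (tTop n) with hx | hx
    · exact absurd (le_antisymm (le_tTop y) (hx ▸ hxy)) hy
    · rcases eq_or_ne x (tBot n) with hx2 | hx2
      · simp only [phi, if_neg hx, if_pos hx2]; exact V3.f_le _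
      · rcases eq_or_ne y (tBot n) with hy2 | hy2
        · exact absurd (le_antisymm (hy2 ▸ hxy) (tBot_le x)) hx2
        · simp only [phi, if_neg hx, if_neg hx2, if_neg hy, if_neg hy2, le_refl]

lemma tneg_eq_tTop_iff {n : ℕ} {x : Tup n} : tneg x = tTop n ↔ x = tBot n := by
  simp [Tup.ext_iff', tneg, tTop, tBot, funext_iff]

lemma tneg_eq_tBot_iff {n : ℕ} {x : Tup n} : tneg x = tBot n ↔ x = tTop n := by
  simp [Tup.ext_iff', tneg, tTop, tBot, funext_iff]

lemma phi_tneg {n : ℕ} (hne : tTop n ≠ tBot n) (x : Tup n) :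
    phi (tneg x) = (phi x).negv := by
  rcases eq_or_ne x (tTop n) with hx | hx
  · have h1 : tneg x = tBot n := tneg_eq_tBot_iff.mpr hx
    have h2 : tneg x ≠ tTop n := h1 ▸ Ne.symm hne
    rw [show phi (tneg x) = V3.f from by rw [phi, if_neg h2, if_pos h1],
      show phi x = V3.t from by rw [phi, if_pos hx]]
    rfl
  · rcases eq_or_ne x (tBot n) with hx2 | hx2
    · have h1 : tneg x = tTop n := tneg_eq_tTop_iff.mpr hx2
      rw [show phi (tneg x) = V3.t from by rw [phi, if_pos h1],
        show phi x = V3.f from by rw [phi, if_neg hx, if_pos hx2]]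
      rfl
    · have h1 : tneg x ≠ tTop n := fun h => hx2 (tneg_eq_tTop_iff.mp h)
      have h2 : tneg x ≠ tBot n := fun h => hx (tneg_eq_tBot_iff.mp h)
      rw [show phi (tneg x) = V3.i from by rw [phi, if_neg h1, if_neg h2],
        show phi x = V3.i from by rw [phi, if_neg hx, if_neg hx2]]
      rfl

lemma exists_eq_iInf {α D : Type*} [CompleteLinearOrder α] [Finite α] [Nonempty D]
    (g : D → α) : ∃ d, g d = ⨅ x, g x := by
  have hS : (Set.range g).Finite := Set.toFinite _
  have hne : (Set.range g).Nonempty := Set.range_nonempty g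
  obtain ⟨d, hd⟩ := hne.csInf_mem hS
  exact ⟨d, hd⟩

lemma exists_eq_iSup {α D : Type*} [CompleteLinearOrder α] [Finite α] [Nonempty D]
    (g : D → α) : ∃ d, g d = ⨆ x, g x := by
  have hS : (Set.range g).Finite := Set.toFinite _
  have hne : (Set.range g).Nonempty := Set.range_nonempty g
  obtain ⟨d, hd⟩ := hne.csSup_mem hS
  exact ⟨d, hd⟩

lemma mono_map_iInf {α β D : Type*} [CompleteLinearOrder α] [Finite α]
    [CompleteLinearOrder β] [Nonempty D] {f : α → β} (hf : Monotone f) (g : D → α) :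
    f (⨅ d, g d) = ⨅ d, f (g d) := by
  obtain ⟨d0, hd0⟩ := exists_eq_iInf g
  apply le_antisymm
  · exact le_iInf fun d => hf (iInf_le g d)
  · rw [← hd0]; exact iInf_le (fun d => f (g d)) d0

lemma mono_map_iSup {α β D : Type*} [CompleteLinearOrder α] [Finite α]
    [CompleteLinearOrder β] [Nonempty D] {f : α → β} (hf : Monotone f) (g : D → α) :
    f (⨆ d, g d) = ⨆ d, f (g d) := by
  obtain ⟨d0, hd0⟩ := exists_eq_iSup g
  apply le_antisymm
  · rw [← hd0]; exact le_iSup (fun d => f (g d)) d0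
  · exact iSup_le fun d => hf (le_iSup g d)

lemma feval_eq {Pred Const : Type} {ar : Pred → ℕ} {n : ℕ} (hne : tTop n ≠ tBot n)
    {D : Type} [Nonempty D] (cv : Const → D)
    (pvT : (P : Pred) → (Fin (ar P) → D) → Tup n)
    (A : FForm Pred Const ar) : ∀ σ : ℕ → D,
    feval3 cv (fun P args => phi (pvT P args)) σ A = phi (fevalT cv pvT σ A) := by
  induction A with
  | atom P ts => intro σ; rfl
  | neg A ih => intro σ; simp only [feval3, fevalT, ih, phi_tneg hne]
  | conj A B ihA ihB =>
    intro σ; simp only [feval3, fevalT, ihA, ihB, phi_mono.map_min]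
  | disj A B ihA ihB =>
    intro σ; simp only [feval3, fevalT, ihA, ihB, phi_mono.map_max]
  | all x A ih =>
    intro σ
    simp only [feval3, fevalT]
    simp only [ih]
    exact (@mono_map_iInf _ _ _ Pi.Lex.instCompleteLinearOrderLexForall _ _ _ _ phi_mono (fun d => fevalT cv pvT (Function.update σ x d) A)).symm
  | ex x A ih =>
    intro σ
    simp only [feval3, fevalT]
    simp only [ih]
    exact (@mono_map_iSup _ _ _ Pi.Lex.instCompleteLinearOrderLexForall _ _ _ _ phi_mono (fun d => fevalT cv pvT (Function.update σ x d) A)).symm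

/-- A middle element of `2^n` (for `n ≥ 2`). -/
def tMid (n : ℕ) : Tup n := toLex fun i => decide (i.val = 0)

lemma tMid_ne_tTop {n : ℕ} (hn : 2 ≤ n) : tMid n ≠ tTop n := by
  intro h
  have := Tup.ext_iff'.mp h ⟨1, by omega⟩
  simp [tMid, tTop] at this

lemma tMid_ne_tBot {n : ℕ} (hn : 2 ≤ n) : tMid n ≠ tBot n := by
  intro h
  have := Tup.ext_iff'.mp h ⟨0, by omega⟩
  simp [tMid, tBot] at this

/-- Section of `phi`. -/
def psi (n : ℕ) : V3 → Tup n
  | .t => tTop n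
  | .i => tMid n
  | .f => tBot n

lemma tTop_ne_tBot {n : ℕ} (hn : 2 ≤ n) : tTop n ≠ tBot n := by
  intro h
  have := Tup.ext_iff'.mp h ⟨0, by omega⟩
  simp [tTop, tBot] at this

lemma phi_psi {n : ℕ} (hn : 2 ≤ n) (v : V3) : phi (psi n v) = v := by
  cases v with
  | t => simp [psi, phi]
  | f => simp [psi, phi, Ne.symm (tTop_ne_tBot hn)]
  | i => simp [psi, phi, tMid_ne_tTop hn, tMid_ne_tBot hn]

lemma phi_eq_t_iff {n : ℕ} {x : Tup n} : phi x = .t ↔ x = tTop n := by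
  constructor
  · intro h
    by_cases h1 : x = tTop n
    · exact h1
    · by_cases h2 : x = tBot n
      · rw [phi, if_neg h1, if_pos h2] at h; simp at h
      · rw [phi, if_neg h1, if_neg h2] at h; simp at h
  · intro h; rw [phi, if_pos h]

lemma phi_eq_f_imp {n : ℕ} {x : Tup n} (h : phi x = .f) : x = tBot n := by
  by_cases h1 : x = tTop n
  · simp [phi, h1] at h
  · by_cases h2 : x = tBot n
    · exact h2
    · simp [phi, h1, h2] at h

/-- strict-tolerant `n`-tuple consequence coincides with ST consequence. -/
theorem strictTolerant_iff_ST (n : ℕ) (hn : 2 ≤ n) (Pred Const : Type) (ar : Pred → ℕ)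
    (Γ : Set (FForm Pred Const ar)) (A : FForm Pred Const ar) :
    ConseqNST n Pred Const ar Γ A ↔ ConseqST Pred Const ar Γ A := by
  have hne : tTop n ≠ tBot n := tTop_ne_tBot hn
  constructor
  · intro hNST D hD cv pv3 σ hprem
    haveI := hD
    set pvT : (P : Pred) → (Fin (ar P) → D) → Tup n :=
      fun P args => psi n (pv3 P args) with hpvT
    have hcomp : (fun P args => phi (pvT P args)) = pv3 := by
      funext P args; simp [hpvT, phi_psi hn]
    have key : ∀ (B : FForm Pred Const ar) (σ' : ℕ → D),
        feval3 cv pv3 σ' B = phi (fevalT cv pvT σ' B) := by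
      intro B σ'
      have := feval_eq hne cv pvT B σ'
      rwa [hcomp] at this
    have hT : fevalT cv pvT σ A ≠ tBot n := by
      apply hNST D hD cv pvT σ
      intro B hB
      have h := hprem B hB
      rw [key B σ] at h
      exact phi_eq_t_iff.mp h
    rw [key A σ]
    cases h : phi (fevalT cv pvT σ A) with
    | t => simp
    | i => simp
    | f => exact absurd (phi_eq_f_imp h) hT
  · intro hST D hD cv pvT σ hprem
    haveI := hD
    have key : ∀ (B : FForm Pred Const ar) (σ' : ℕ → D),
        feval3 cv (fun P args => phi (pvT P args)) σ' B = phi (fevalT cv pvT σ' B) :=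
      fun B σ' => feval_eq hne cv pvT B σ'
    intro hbot
    have h := hST D hD cv (fun P args => phi (pvT P args)) σ (fun B hB => by
      rw [key B σ, hprem B hB]
      exact phi_eq_t_iff.mpr rfl)
    rw [key A σ, hbot] at h
    have hf : phi (tBot n) = V3.f := by
      rw [phi, if_neg (Ne.symm hne), if_pos rfl]
    rw [hf] at h
    simp at h
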